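/- Under the late-stage training assumption, the norms of the iterates grow at most logarithmically: there exist a constant c₂ > 0 and an index k₁ ∈ ℕ such that ‖w_k‖^L ≤ c₂·log k for all k ≥ k₁. -/

import Mathlib

open scoped RealInnerProductSpace


lemma aux_sq_le_exp (x : ℝ) (hx : 0 ≤ x) : x^2/4 ≤ Real.exp x := by
  have h := Real.add_one_le_exp (x/2)
  have h2 : Real.exp (x/2) * Real.exp (x/2) = Real.exp x := by
    rw [← Real.exp_add]; ring_nf
  nlinarith [Real.exp_pos (x/2)]

lemma aux_exp_neg_le (x : ℝ) (hx : 0 < x) : Real.exp (-x) ≤ 4/x^2 := by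
  have h := aux_sq_le_exp x hx.le
  rw [Real.exp_neg]
  calc (Real.exp x)⁻¹ ≤ (x^2/4)⁻¹ := by
        apply inv_anti₀ (by positivity) h
    _ = 4/x^2 := by rw [inv_div]
  
lemma aux_exp_sub_one (x : ℝ) (hx : 0 ≤ x) : Real.exp x ≤ 1 + x * Real.exp x := by
  have h := Real.add_one_le_exp (-x)
  have h2 : Real.exp (-x) * Real.exp x = 1 := by rw [← Real.exp_add]; simp
  nlinarith [Real.exp_pos x, Real.exp_pos (-x)]

lemma aux_exp_le (x : ℝ) (h0 : 0 ≤ x) (h1 : x ≤ 1) : Real.exp x ≤ 1 + 3*x := by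
  have h2 := aux_exp_sub_one x h0
  have h3 : Real.exp x ≤ Real.exp 1 := Real.exp_le_exp.mpr h1
  have h4 : Real.exp 1 ≤ 3 := by
    nlinarith [Real.exp_one_lt_d9]
  nlinarith

lemma aux_one_add_pow (t : ℝ) (ht : 0 ≤ t) (n : ℕ) : (1+t)^n ≤ Real.exp (n*t) := by
  calc (1+t)^n ≤ (Real.exp t)^n := by
        apply pow_le_pow_left₀ (by linarith)
        linarith [Real.add_one_le_exp t]
    _ = Real.exp (n*t) := by rw [← Real.exp_nat_mul]

set_option maxHeartbeats 1000000 in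
lemma key_step (m : ℕ) (ε γ M : ℝ) (hε : 0 < ε) (hγ : 0 < γ) (hM : 1 ≤ M) :
    ∃ C : ℝ, 0 < C ∧ ∀ r r' : ℝ, 0 < r → 0 ≤ r' →
      r' ≤ r + γ * M * r ^ m * Real.exp (-(ε * r ^ (m+1))) →
      Real.exp (ε/2 * r' ^ (m+1)) ≤ Real.exp (ε/2 * r ^ (m+1)) + C := by
  have hM0 : (0:ℝ) < M := lt_of_lt_of_le one_pos hM
  refine ⟨24*((m:ℝ)+1)*γ*M/ε * Real.exp (24*((m:ℝ)+1)*γ*M/ε)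
      + Real.exp (ε/2 * (max 1 (4*((m:ℝ)+1)*γ*M/ε^2)
          + γ*M*(max 1 (4*((m:ℝ)+1)*γ*M/ε^2))^m)^(m+1)), by positivity, ?_⟩
  intro r r' hr hr' hle
  have hδ0 : (0:ℝ) < γ * M * r ^ m * Real.exp (-(ε * r ^ (m+1))) := by positivity
  have hE1 : Real.exp (-(ε * r ^ (m+1))) ≤ 1 := by
    rw [Real.exp_le_one_iff]
    have : (0:ℝ) ≤ ε * r ^ (m+1) := by positivity
    linarith
  have hmono : Real.exp (ε/2 * r' ^ (m+1)) ≤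
      Real.exp (ε/2 * (r + γ * M * r ^ m * Real.exp (-(ε * r ^ (m+1)))) ^ (m+1)) := by
    apply Real.exp_le_exp.mpr
    apply mul_le_mul_of_nonneg_left _ (by positivity)
    exact pow_le_pow_left₀ hr' hle _
  rcases le_or_gt r (max 1 (4*((m:ℝ)+1)*γ*M/ε^2)) with hcase | hcase
  · -- small case
    have hR : r + γ * M * r ^ m * Real.exp (-(ε * r ^ (m+1)))
        ≤ max 1 (4*((m:ℝ)+1)*γ*M/ε^2) + γ*M*(max 1 (4*((m:ℝ)+1)*γ*M/ε^2))^m := by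
      have h1 : r ^ m ≤ (max 1 (4*((m:ℝ)+1)*γ*M/ε^2)) ^ m :=
        pow_le_pow_left₀ hr.le hcase _
      have h2 : γ * M * r ^ m * Real.exp (-(ε * r ^ (m+1))) ≤ γ * M * (max 1 (4*((m:ℝ)+1)*γ*M/ε^2)) ^ m := by
        calc γ * M * r ^ m * Real.exp (-(ε * r ^ (m+1))) ≤ γ * M * r ^ m * 1 := by
              apply mul_le_mul_of_nonneg_left hE1 (by positivity)
          _ = γ * M * r ^ m := by ring
          _ ≤ γ * M * (max 1 (4*((m:ℝ)+1)*γ*M/ε^2)) ^ m := by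
              apply mul_le_mul_of_nonneg_left h1 (by positivity)
      linarith
    have h3 : Real.exp (ε/2 * (r + γ * M * r ^ m * Real.exp (-(ε * r ^ (m+1)))) ^ (m+1))
        ≤ Real.exp (ε/2 * (max 1 (4*((m:ℝ)+1)*γ*M/ε^2)
          + γ*M*(max 1 (4*((m:ℝ)+1)*γ*M/ε^2))^m)^(m+1)) := by
      apply Real.exp_le_exp.mpr
      apply mul_le_mul_of_nonneg_left _ (by positivity)
      apply pow_le_pow_left₀ (by positivity) hR
    have h4 : (0:ℝ) < 24*((m:ℝ)+1)*γ*M/ε * Real.exp (24*((m:ℝ)+1)*γ*M/ε) := by positivity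
    have h5 := Real.exp_pos (ε/2 * r ^ (m+1))
    linarith [hmono.trans h3]
  · -- large case
    have hr1 : (1:ℝ) ≤ r := le_trans (le_max_left _ _) hcase.le
    have hrbig : 4*((m:ℝ)+1)*γ*M/ε^2 ≤ r := le_trans (le_max_right _ _) hcase.le
    have hA3 : 4*((m:ℝ)+1)*γ*M ≤ ε^2*r := by
      rw [div_le_iff₀ (by positivity)] at hrbig
      linarith
    have hpos : (0:ℝ) < ε^2*(r^(m+1))^2 := by positivity
    -- bound: ε²P²·E ≤ 4
    have hE4 : ε^2*(r^(m+1))^2 * Real.exp (-(ε * r ^ (m+1))) ≤ 4 := by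
      have h := aux_exp_neg_le (ε * r^(m+1)) (by positivity)
      calc ε^2*(r^(m+1))^2 * Real.exp (-(ε * r ^ (m+1)))
          ≤ ε^2*(r^(m+1))^2 * (4/(ε * r^(m+1))^2) := by
            apply mul_le_mul_of_nonneg_left h (by positivity)
        _ = 4 := by field_simp
    have hF16 : ε^2*(r^(m+1))^2 * Real.exp (-(ε/2 * r ^ (m+1))) ≤ 16 := by
      have h := aux_exp_neg_le (ε/2 * r^(m+1)) (by positivity)
      calc ε^2*(r^(m+1))^2 * Real.exp (-(ε/2 * r ^ (m+1)))
          ≤ ε^2*(r^(m+1))^2 * (4/(ε/2 * r^(m+1))^2) := by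
            apply mul_le_mul_of_nonneg_left h (by positivity)
        _ = 16 := by field_simp; ring
    -- step 1 : (m+1) * δ ≤ r
    have goal1 : ((m:ℝ)+1) * (γ * M * r ^ m * Real.exp (-(ε * r ^ (m+1)))) ≤ r := by
      rw [← mul_le_mul_iff_left₀ hpos]
      calc ((m:ℝ)+1) * (γ * M * r ^ m * Real.exp (-(ε * r ^ (m+1)))) * (ε^2*(r^(m+1))^2)
          = ((m:ℝ)+1)*γ*M*r^m * (ε^2*(r^(m+1))^2 * Real.exp (-(ε * r ^ (m+1)))) := by ring
        _ ≤ ((m:ℝ)+1)*γ*M*r^m * 4 := by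
            apply mul_le_mul_of_nonneg_left hE4 (by positivity)
        _ = (4*((m:ℝ)+1)*γ*M) * r^m := by ring
        _ ≤ (ε^2*r) * r^m := by
            apply mul_le_mul_of_nonneg_right hA3 (by positivity)
        _ = ε^2 * r^(m+1) := by ring
        _ ≤ ε^2 * r^(2*m+3) := by
            apply mul_le_mul_of_nonneg_left (pow_le_pow_right₀ hr1 (by omega)) (by positivity)
        _ = r * (ε^2*(r^(m+1))^2) := by ring
    -- step (a) : (r+δ)^(m+1) ≤ r^(m+1) + 3(m+1) r^m δ
    have hne : r ≠ 0 := ne_of_gt hr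
    have ha : (r + γ * M * r ^ m * Real.exp (-(ε * r ^ (m+1)))) ^ (m+1)
        ≤ r^(m+1) + 3*((m:ℝ)+1)*r^m*(γ * M * r ^ m * Real.exp (-(ε * r ^ (m+1)))) := by
      have hδr : r + γ * M * r ^ m * Real.exp (-(ε * r ^ (m+1)))
          = r * (1 + (γ * M * r ^ m * Real.exp (-(ε * r ^ (m+1))))/r) := by
        field_simp
      have ht0 : (0:ℝ) ≤ (γ * M * r ^ m * Real.exp (-(ε * r ^ (m+1))))/r := by positivity
      have ht1 : ((m:ℝ)+1) * ((γ * M * r ^ m * Real.exp (-(ε * r ^ (m+1))))/r) ≤ 1 := by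
        rw [mul_div_assoc' ]
        rw [div_le_one hr]
        exact goal1
      calc (r + γ * M * r ^ m * Real.exp (-(ε * r ^ (m+1)))) ^ (m+1)
          = r^(m+1) * (1 + (γ * M * r ^ m * Real.exp (-(ε * r ^ (m+1))))/r)^(m+1) := by
            rw [hδr, mul_pow]
        _ ≤ r^(m+1) * Real.exp (((m:ℝ)+1) * ((γ * M * r ^ m * Real.exp (-(ε * r ^ (m+1))))/r)) := by
            apply mul_le_mul_of_nonneg_left _ (by positivity)
            have := aux_one_add_pow ((γ * M * r ^ m * Real.exp (-(ε * r ^ (m+1))))/r) ht0 (m+1)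
            rw [show ((m:ℝ)+1) = ((m+1 : ℕ) : ℝ) by push_cast; ring]
            exact this
        _ ≤ r^(m+1) * (1 + 3*(((m:ℝ)+1) * ((γ * M * r ^ m * Real.exp (-(ε * r ^ (m+1))))/r))) := by
            apply mul_le_mul_of_nonneg_left (aux_exp_le _ (by positivity) ht1) (by positivity)
        _ = r^(m+1) + 3*((m:ℝ)+1)*(r^(m+1)/r)*(γ * M * r ^ m * Real.exp (-(ε * r ^ (m+1)))) := by
            field_simp
        _ = r^(m+1) + 3*((m:ℝ)+1)*r^m*(γ * M * r ^ m * Real.exp (-(ε * r ^ (m+1)))) := by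
            rw [pow_succ, mul_div_assoc, div_self hne, mul_one]
    -- step (b) : D ≤ K * F
    have hEFF : Real.exp (-(ε * r ^ (m+1)))
        = Real.exp (-(ε/2 * r ^ (m+1))) * Real.exp (-(ε/2 * r ^ (m+1))) := by
      rw [← Real.exp_add]; ring_nf
    have hb : ε/2 * (3*((m:ℝ)+1)*r^m*(γ * M * r ^ m * Real.exp (-(ε * r ^ (m+1)))))
        ≤ 24*((m:ℝ)+1)*γ*M/ε * Real.exp (-(ε/2 * r ^ (m+1))) := by
      rw [← mul_le_mul_iff_left₀ hpos, hEFF]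
      have hpow : r^m*r^m ≤ (r^(m+1))^2 := by
        calc r^m*r^m = r^(2*m) := by ring
          _ ≤ r^(2*m+2) := pow_le_pow_right₀ hr1 (by omega)
          _ = (r^(m+1))^2 := by ring
      calc ε/2 * (3*((m:ℝ)+1)*r^m*(γ * M * r ^ m * (Real.exp (-(ε/2 * r ^ (m+1))) * Real.exp (-(ε/2 * r ^ (m+1)))))) * (ε^2*(r^(m+1))^2)
          = (3/2*ε*((m:ℝ)+1)*γ*M*(r^m*r^m)*Real.exp (-(ε/2 * r ^ (m+1))))
            * (ε^2*(r^(m+1))^2 * Real.exp (-(ε/2 * r ^ (m+1)))) := by ring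
        _ ≤ (3/2*ε*((m:ℝ)+1)*γ*M*(r^m*r^m)*Real.exp (-(ε/2 * r ^ (m+1)))) * 16 := by
            apply mul_le_mul_of_nonneg_left hF16 (by positivity)
        _ = (24*((m:ℝ)+1)*γ*M/ε * Real.exp (-(ε/2 * r ^ (m+1)))) * (ε^2*(r^m*r^m)) := by
            field_simp; ring
        _ ≤ (24*((m:ℝ)+1)*γ*M/ε * Real.exp (-(ε/2 * r ^ (m+1)))) * (ε^2*(r^(m+1))^2) := by
            apply mul_le_mul_of_nonneg_left _ (by positivity)
            apply mul_le_mul_of_nonneg_left hpow (by positivity)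
    -- assemble
    have hD0 : (0:ℝ) ≤ ε/2 * (3*((m:ℝ)+1)*r^m*(γ * M * r ^ m * Real.exp (-(ε * r ^ (m+1))))) := by
      positivity
    have hF1 : Real.exp (-(ε/2 * r ^ (m+1))) ≤ 1 := by
      rw [Real.exp_le_one_iff]
      have : (0:ℝ) ≤ ε/2 * r ^ (m+1) := by positivity
      linarith
    have hK0 : (0:ℝ) ≤ 24*((m:ℝ)+1)*γ*M/ε := by positivity
    have hDK : ε/2 * (3*((m:ℝ)+1)*r^m*(γ * M * r ^ m * Real.exp (-(ε * r ^ (m+1)))))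
        ≤ 24*((m:ℝ)+1)*γ*M/ε := by
      calc _ ≤ 24*((m:ℝ)+1)*γ*M/ε * Real.exp (-(ε/2 * r ^ (m+1))) := hb
        _ ≤ 24*((m:ℝ)+1)*γ*M/ε * 1 := mul_le_mul_of_nonneg_left hF1 hK0
        _ = 24*((m:ℝ)+1)*γ*M/ε := by ring
    have hid : Real.exp (ε/2 * r ^ (m+1)) * Real.exp (-(ε/2 * r ^ (m+1))) = 1 := by
      rw [← Real.exp_add]; simp
    have h9 : Real.exp (ε/2 * r ^ (m+1))
        * (ε/2 * (3*((m:ℝ)+1)*r^m*(γ * M * r ^ m * Real.exp (-(ε * r ^ (m+1)))))) ≤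
        24*((m:ℝ)+1)*γ*M/ε := by
      calc Real.exp (ε/2 * r ^ (m+1)) * (ε/2 * (3*((m:ℝ)+1)*r^m*(γ * M * r ^ m * Real.exp (-(ε * r ^ (m+1))))))
          ≤ Real.exp (ε/2 * r ^ (m+1)) * (24*((m:ℝ)+1)*γ*M/ε * Real.exp (-(ε/2 * r ^ (m+1)))) :=
            mul_le_mul_of_nonneg_left hb (Real.exp_pos _).le
        _ = 24*((m:ℝ)+1)*γ*M/ε * (Real.exp (ε/2 * r ^ (m+1)) * Real.exp (-(ε/2 * r ^ (m+1)))) := by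
            ring
        _ = 24*((m:ℝ)+1)*γ*M/ε := by rw [hid, mul_one]
    have hexpD : Real.exp (ε/2 * (3*((m:ℝ)+1)*r^m*(γ * M * r ^ m * Real.exp (-(ε * r ^ (m+1))))))
        ≤ 1 + (ε/2 * (3*((m:ℝ)+1)*r^m*(γ * M * r ^ m * Real.exp (-(ε * r ^ (m+1)))))) * Real.exp (24*((m:ℝ)+1)*γ*M/ε) := by
      calc _ ≤ 1 + (ε/2 * (3*((m:ℝ)+1)*r^m*(γ * M * r ^ m * Real.exp (-(ε * r ^ (m+1)))))) * Real.exp (ε/2 * (3*((m:ℝ)+1)*r^m*(γ * M * r ^ m * Real.exp (-(ε * r ^ (m+1)))))) :=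
            aux_exp_sub_one _ hD0
        _ ≤ _ := by
            have := Real.exp_le_exp.mpr hDK
            nlinarith [this, hD0]
    calc Real.exp (ε/2 * r' ^ (m+1))
        ≤ Real.exp (ε/2 * (r + γ * M * r ^ m * Real.exp (-(ε * r ^ (m+1)))) ^ (m+1)) := hmono
      _ ≤ Real.exp (ε/2 * (r^(m+1) + 3*((m:ℝ)+1)*r^m*(γ * M * r ^ m * Real.exp (-(ε * r ^ (m+1)))))) := by
          apply Real.exp_le_exp.mpr
          apply mul_le_mul_of_nonneg_left ha (by positivity)
      _ = Real.exp (ε/2 * r^(m+1)) * Real.exp (ε/2 * (3*((m:ℝ)+1)*r^m*(γ * M * r ^ m * Real.exp (-(ε * r ^ (m+1)))))) := by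
          rw [← Real.exp_add]; ring_nf
      _ ≤ Real.exp (ε/2 * r^(m+1)) * (1 + (ε/2 * (3*((m:ℝ)+1)*r^m*(γ * M * r ^ m * Real.exp (-(ε * r ^ (m+1)))))) * Real.exp (24*((m:ℝ)+1)*γ*M/ε)) :=
          mul_le_mul_of_nonneg_left hexpD (Real.exp_pos _).le
      _ ≤ Real.exp (ε/2 * r ^ (m+1)) + 24*((m:ℝ)+1)*γ*M/ε * Real.exp (24*((m:ℝ)+1)*γ*M/ε) := by
          have h10 := mul_le_mul_of_nonneg_right h9 (Real.exp_pos (24*((m:ℝ)+1)*γ*M/ε)).le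
          have h11 : Real.exp (ε/2 * r ^ (m+1)) * (1 + (ε/2 * (3*((m:ℝ)+1)*r^m*(γ * M * r ^ m * Real.exp (-(ε * r ^ (m+1)))))) * Real.exp (24*((m:ℝ)+1)*γ*M/ε))
              = Real.exp (ε/2 * r ^ (m+1)) + (Real.exp (ε/2 * r ^ (m+1)) * (ε/2 * (3*((m:ℝ)+1)*r^m*(γ * M * r ^ m * Real.exp (-(ε * r ^ (m+1))))))) * Real.exp (24*((m:ℝ)+1)*γ*M/ε) := by
            ring
          rw [h11]
          linarith [h10]
      _ ≤ _ := by
          have h5 := Real.exp_pos (ε/2 * (max 1 (4*((m:ℝ)+1)*γ*M/ε^2)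
            + γ*M*(max 1 (4*((m:ℝ)+1)*γ*M/ε^2))^m)^(m+1))
          linarith

/-- Under the late-stage training assumption, the iterate norms grow at most
logarithmically. -/
theorem stmt_5 {d n L : ℕ} (hd : 0 < d) (hn : 0 < n) (hL : 0 < L)
    (p : Fin n → EuclideanSpace ℝ (Fin d) → ℝ)
    (hplip : ∀ i, LocallyLipschitz (p i))
    (hphom : ∀ i, ∀ c : ℝ, 0 < c → ∀ w, p i (c • w) = c ^ L * p i w)
    (a : Fin n → EuclideanSpace ℝ (Fin d) → EuclideanSpace ℝ (Fin d))
    (haw : ∀ i w, ⟪a i w, w⟫ = (L : ℝ) * p i w)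
    (hahom : ∀ i, ∀ c : ℝ, 0 < c → ∀ w, a i (c • w) = c ^ (L - 1) • a i w)
    (habd : ∀ i, ∃ M : ℝ, ∀ u : EuclideanSpace ℝ (Fin d), ‖u‖ = 1 → ‖a i u‖ ≤ M)
    (l : ℝ → ℝ) (hl : Differentiable ℝ l)
    (hl' : ∀ q : ℝ, 0 ≤ q →
      (1 / 2) * Real.exp (-q) ≤ -deriv l q ∧ -deriv l q ≤ Real.exp (-q))
    (γ : ℝ) (hγ : 0 < γ)
    (B : ℕ → Finset (Fin n)) (hB : ∀ k, (B k).Nonempty)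
    (w : ℕ → EuclideanSpace ℝ (Fin d))
    (hw : ∀ k, w (k + 1) =
      w k - (γ / (B k).card) • ∑ i ∈ B k, deriv l (p i (w k)) • a i (w k))
    (ε : ℝ) (hε : 0 < ε) (k₀ : ℕ)
    (hlate : ∀ k ≥ k₀, w k ≠ 0 ∧ ε ≤ ⨅ i, p i ((‖w k‖)⁻¹ • w k)) :
    ∃ c₂ : ℝ, 0 < c₂ ∧ ∃ k₁ : ℕ, ∀ k ≥ k₁, ‖w k‖ ^ L ≤ c₂ * Real.log k := by
  have : Nonempty (Fin n) := ⟨⟨0, hn⟩⟩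
  -- uniform bound M on ‖a i u‖ for unit u
  choose Mb hMb using habd
  set M : ℝ := 1 + ∑ i, |Mb i| with hMdef
  have hM1 : (1:ℝ) ≤ M := by
    have : (0:ℝ) ≤ ∑ i, |Mb i| := Finset.sum_nonneg fun i _ => abs_nonneg _
    simp only [hMdef]; linarith
  have hMi : ∀ i, Mb i ≤ M := by
    intro i
    have h1 : |Mb i| ≤ ∑ j, |Mb j| :=
      Finset.single_le_sum (fun j _ => abs_nonneg (Mb j)) (Finset.mem_univ i)
    have := le_abs_self (Mb i)
    simp only [hMdef]; linarith
  have hM0 : (0:ℝ) < M := lt_of_lt_of_le one_pos hM1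
  -- one-step norm bound
  have hstep : ∀ k, k₀ ≤ k →
      ‖w (k+1)‖ ≤ ‖w k‖ + γ * M * ‖w k‖ ^ (L-1) * Real.exp (-(ε * ‖w k‖ ^ L)) := by
    intro k hk
    obtain ⟨hwk0, hmarg⟩ := hlate k hk
    have hne : ‖w k‖ ≠ 0 := norm_ne_zero_iff.mpr hwk0
    have hr : (0:ℝ) < ‖w k‖ := norm_pos_iff.mpr hwk0
    have hu : ‖(‖w k‖)⁻¹ • w k‖ = 1 := norm_smul_inv_norm hwk0
    have hwu : ‖w k‖ • ((‖w k‖)⁻¹ • w k) = w k := smul_inv_smul₀ hne (w k)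
    -- margin: for each i, ε ≤ p i u
    have hpu : ∀ i, ε ≤ p i ((‖w k‖)⁻¹ • w k) := fun i =>
      le_trans hmarg (ciInf_le (Finite.bddBelow_range _) i)
    have hpi : ∀ i, p i (w k) = ‖w k‖ ^ L * p i ((‖w k‖)⁻¹ • w k) := by
      intro i
      conv_lhs => rw [← hwu]
      exact hphom i _ hr _
    have hqlb : ∀ i, ε * ‖w k‖ ^ L ≤ p i (w k) := by
      intro i
      rw [hpi i]
      calc ε * ‖w k‖ ^ L = ‖w k‖ ^ L * ε := by ring
        _ ≤ ‖w k‖ ^ L * p i ((‖w k‖)⁻¹ • w k) :=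
          mul_le_mul_of_nonneg_left (hpu i) (by positivity)
    have hq0 : ∀ i, (0:ℝ) ≤ p i (w k) := by
      intro i
      have := hqlb i
      have h2 : (0:ℝ) ≤ ε * ‖w k‖ ^ L := by positivity
      linarith
    -- bound on each summand
    have hterm : ∀ i ∈ B k, ‖deriv l (p i (w k)) • a i (w k)‖
        ≤ Real.exp (-(ε * ‖w k‖ ^ L)) * (M * ‖w k‖ ^ (L-1)) := by
      intro i _
      obtain ⟨hd1, hd2⟩ := hl' (p i (w k)) (hq0 i)
      have hdneg : deriv l (p i (w k)) ≤ 0 := by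
        have := Real.exp_pos (-(p i (w k)))
        nlinarith
      have habs : |deriv l (p i (w k))| ≤ Real.exp (-(ε * ‖w k‖ ^ L)) := by
        rw [abs_of_nonpos hdneg]
        calc -deriv l (p i (w k)) ≤ Real.exp (-(p i (w k))) := hd2
          _ ≤ Real.exp (-(ε * ‖w k‖ ^ L)) := Real.exp_le_exp.mpr (by linarith [hqlb i])
      have hai : ‖a i (w k)‖ ≤ M * ‖w k‖ ^ (L-1) := by
        have h3 : a i (w k) = ‖w k‖ ^ (L-1) • a i ((‖w k‖)⁻¹ • w k) := by
          conv_lhs => rw [← hwu]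
          exact hahom i _ hr _
        rw [h3, norm_smul, Real.norm_eq_abs, abs_of_nonneg (by positivity)]
        calc ‖w k‖ ^ (L-1) * ‖a i ((‖w k‖)⁻¹ • w k)‖
            ≤ ‖w k‖ ^ (L-1) * M := by
              apply mul_le_mul_of_nonneg_left ((hMb i _ hu).trans (hMi i)) (by positivity)
          _ = M * ‖w k‖ ^ (L-1) := by ring
      rw [norm_smul, Real.norm_eq_abs]
      exact mul_le_mul habs hai (norm_nonneg _) (Real.exp_pos _).le
    -- sum bound
    have hcard : (0:ℝ) < ((B k).card : ℝ) := by
      exact_mod_cast Finset.card_pos.mpr (hB k)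
    have hsum : ‖∑ i ∈ B k, deriv l (p i (w k)) • a i (w k)‖
        ≤ ((B k).card : ℝ) * (Real.exp (-(ε * ‖w k‖ ^ L)) * (M * ‖w k‖ ^ (L-1))) := by
      calc ‖∑ i ∈ B k, deriv l (p i (w k)) • a i (w k)‖
          ≤ ∑ i ∈ B k, ‖deriv l (p i (w k)) • a i (w k)‖ := norm_sum_le _ _
        _ ≤ ∑ _i ∈ B k, Real.exp (-(ε * ‖w k‖ ^ L)) * (M * ‖w k‖ ^ (L-1)) :=
            Finset.sum_le_sum hterm
        _ = ((B k).card : ℝ) * (Real.exp (-(ε * ‖w k‖ ^ L)) * (M * ‖w k‖ ^ (L-1))) := by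
            rw [Finset.sum_const, nsmul_eq_mul]
    have hstep1 : ‖w (k+1)‖ ≤ ‖w k‖
        + ‖(γ / ((B k).card : ℝ)) • ∑ i ∈ B k, deriv l (p i (w k)) • a i (w k)‖ := by
      rw [hw k]
      exact norm_sub_le _ _
    have hstep2 : ‖(γ / ((B k).card : ℝ)) • ∑ i ∈ B k, deriv l (p i (w k)) • a i (w k)‖
        ≤ γ * M * ‖w k‖ ^ (L-1) * Real.exp (-(ε * ‖w k‖ ^ L)) := by
      rw [norm_smul, Real.norm_eq_abs, abs_of_nonneg (by positivity)]
      calc (γ / ((B k).card : ℝ)) * ‖∑ i ∈ B k, deriv l (p i (w k)) • a i (w k)‖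
          ≤ (γ / ((B k).card : ℝ)) * (((B k).card : ℝ) * (Real.exp (-(ε * ‖w k‖ ^ L)) * (M * ‖w k‖ ^ (L-1)))) :=
            mul_le_mul_of_nonneg_left hsum (by positivity)
        _ = γ * M * ‖w k‖ ^ (L-1) * Real.exp (-(ε * ‖w k‖ ^ L)) := by
            field_simp
    exact hstep1.trans (add_le_add le_rfl hstep2)
  -- replace L by m+1
  obtain ⟨m, rfl⟩ : ∃ m, L = m + 1 := ⟨L - 1, (Nat.succ_pred_eq_of_pos hL).symm⟩
  simp only [Nat.add_sub_cancel] at hstep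
  obtain ⟨C, hC0, hCstep⟩ := key_step m ε γ M hε hγ hM1
  -- iterate
  have hiter : ∀ j : ℕ, Real.exp (ε/2 * ‖w (k₀ + j)‖ ^ (m+1))
      ≤ Real.exp (ε/2 * ‖w k₀‖ ^ (m+1)) + C * j := by
    intro j
    induction j with
    | zero => simp
    | succ j ih =>
      have hk : k₀ ≤ k₀ + j := Nat.le_add_right _ _
      have hr : (0:ℝ) < ‖w (k₀ + j)‖ := norm_pos_iff.mpr (hlate _ hk).1
      have h1 := hCstep ‖w (k₀ + j)‖ ‖w (k₀ + j + 1)‖ hr (norm_nonneg _) (hstep _ hk)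
      have h2 : k₀ + (j + 1) = k₀ + j + 1 := by omega
      rw [h2]
      push_cast
      linarith
  refine ⟨4/ε, by positivity, max k₀ (max 2 ⌈max (Real.exp (ε/2 * ‖w k₀‖ ^ (m+1))) (C+1)⌉₊), ?_⟩
  intro k hk
  have hkk₀ : k₀ ≤ k := le_trans (le_max_left _ _) hk
  have hk2 : 2 ≤ k := le_trans (le_trans (le_max_left _ _) (le_max_right _ _)) hk
  have hkN : (⌈max (Real.exp (ε/2 * ‖w k₀‖ ^ (m+1))) (C+1)⌉₊ : ℕ) ≤ k :=
    le_trans (le_trans (le_max_right _ _) (le_max_right _ _)) hk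
  have hkR : max (Real.exp (ε/2 * ‖w k₀‖ ^ (m+1))) (C+1) ≤ (k:ℝ) :=
    le_trans (Nat.le_ceil _) (by exact_mod_cast hkN)
  have hA : Real.exp (ε/2 * ‖w k₀‖ ^ (m+1)) ≤ (k:ℝ) := le_trans (le_max_left _ _) hkR
  have hC1 : C + 1 ≤ (k:ℝ) := le_trans (le_max_right _ _) hkR
  have hk1 : (1:ℝ) ≤ (k:ℝ) := by exact_mod_cast le_trans (by norm_num) hk2
  obtain ⟨j, rfl⟩ := Nat.exists_eq_add_of_le hkk₀
  have hφ := hiter j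
  have hjk : (j:ℝ) ≤ ((k₀ + j : ℕ) : ℝ) := by push_cast; linarith [Nat.cast_nonneg (α := ℝ) k₀]
  have hbound : Real.exp (ε/2 * ‖w (k₀ + j)‖ ^ (m+1)) ≤ ((k₀ + j : ℕ) : ℝ)^2 := by
    have h1 : Real.exp (ε/2 * ‖w k₀‖ ^ (m+1)) + C * j ≤ (↑(k₀+j) : ℝ) + C * (↑(k₀+j) : ℝ) := by
      have : C * (j:ℝ) ≤ C * (↑(k₀+j):ℝ) := mul_le_mul_of_nonneg_left hjk hC0.le
      linarith
    have h2 : (↑(k₀+j) : ℝ) + C * (↑(k₀+j) : ℝ) = (C+1) * (↑(k₀+j):ℝ) := by ring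
    have h3 : (C+1) * (↑(k₀+j):ℝ) ≤ (↑(k₀+j):ℝ) * (↑(k₀+j):ℝ) :=
      mul_le_mul_of_nonneg_right hC1 (by positivity)
    have h4 : (↑(k₀+j):ℝ) * (↑(k₀+j):ℝ) = (↑(k₀+j):ℝ)^2 := by ring
    linarith
  have hkpos : (0:ℝ) < ((k₀ + j : ℕ) : ℝ) := by linarith
  have hlog : ε/2 * ‖w (k₀ + j)‖ ^ (m+1) ≤ Real.log (((k₀ + j : ℕ) : ℝ)^2) :=
    (Real.le_log_iff_exp_le (by positivity)).mpr hbound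
  rw [Real.log_pow] at hlog
  push_cast at hlog
  have : ‖w (k₀ + j)‖ ^ (m+1) ≤ 4 * Real.log ((k₀ + j : ℕ):ℝ) / ε := by
    rw [le_div_iff₀ hε]
    push_cast
    nlinarith [hlog]
  calc ‖w (k₀ + j)‖ ^ (m+1) ≤ 4 * Real.log ((k₀ + j : ℕ):ℝ) / ε := this
    _ = 4/ε * Real.log ((k₀ + j : ℕ):ℝ) := by ring
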